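/- arXiv:0902.2355 — 2 statements merged into one kernel-verified Lean document; each statement's English description precedes it below -/
import Mathlib

section
/- In a dagger kernel category, for kernels m, n into X, the pullback of n along the effect E_m := m ∘ m† equals the Sasaki hook: E_m⁻¹(n) = m^⊥ ∨ (m ∧ n). Consequently the left adjoint ∃_{E_m} gives the 'and-then' operation k & m = m ∧ (m^⊥ ∨ k), and the Sasaki adjunction k & m ≤ n ⇔ k ≤ (m ⊃ n) holds. -/
open CategoryTheory Limits

universe v u

class Dagger (C : Type u) [Category.{v} C] [HasZeroMorphisms C] where
  dag : ∀ {X Y : C}, (X ⟶ Y) → (Y ⟶ X)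
  dag_dag : ∀ {X Y : C} (f : X ⟶ Y), dag (dag f) = f
  dag_comp : ∀ {X Y Z : C} (f : X ⟶ Y) (g : Y ⟶ Z), dag (f ≫ g) = dag g ≫ dag f
  dag_id : ∀ (X : C), dag (𝟙 X) = 𝟙 X
  dag_zero : ∀ (X Y : C), dag (0 : X ⟶ Y) = 0

namespace Dagger

variable {C : Type u} [Category.{v} C] [HasZeroMorphisms C] [Dagger C]

/-- `f` is a dagger mono: `f† ∘ f = id`. -/
def DaggerMono {X Y : C} (f : X ⟶ Y) : Prop := f ≫ dag f = 𝟙 X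

/-- `f` is a dagger epi: `f ∘ f† = id`. -/
def DaggerEpi {X Y : C} (f : X ⟶ Y) : Prop := dag f ≫ f = 𝟙 Y

/-- `k` is a kernel of `f`. -/
structure IsKer {K X Y : C} (f : X ⟶ Y) (k : K ⟶ X) : Prop where
  comp_zero : k ≫ f = 0
  lift : ∀ {Z : C} (g : Z ⟶ X), g ≫ f = 0 → ∃! h : Z ⟶ K, h ≫ k = g

/-- `k` is a kernel of `f` which is moreover a dagger mono. -/
def IsDagKer {K X Y : C} (f : X ⟶ Y) (k : K ⟶ X) : Prop :=
  IsKer f k ∧ DaggerMono k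

/-- `k` is a (dagger-monic) kernel of some map. -/
def KernelMap {K X : C} (k : K ⟶ X) : Prop :=
  ∃ (Y : C) (f : X ⟶ Y), IsDagKer f k

/-- order of subobjects, by factorisation -/
def SubLE {M N X : C} (m : M ⟶ X) (n : N ⟶ X) : Prop :=
  ∃ φ : M ⟶ N, φ ≫ n = m

/-- equality of subobjects -/
def SubEq {M N X : C} (m : M ⟶ X) (n : N ⟶ X) : Prop :=
  SubLE m n ∧ SubLE n m

/-- `p` represents the orthocomplement `m^⊥ = ker(m†)` of `m`. -/
def IsOrthoOf {M P X : C} (m : M ⟶ X) (p : P ⟶ X) : Prop :=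
  IsDagKer (dag m) p

/-- `w` is the meet (intersection) of the kernels `m` and `n` in `KSub(X)`. -/
def IsMeet {M N W X : C} (m : M ⟶ X) (n : N ⟶ X) (w : W ⟶ X) : Prop :=
  KernelMap w ∧ SubLE w m ∧ SubLE w n ∧
    ∀ {K : C} (k : K ⟶ X), KernelMap k → SubLE k m → SubLE k n → SubLE k w

/-- `j` is the join `m ∨ n = (m^⊥ ∧ n^⊥)^⊥` in `KSub(X)`. -/
def IsJoin {M N J X : C} (m : M ⟶ X) (n : N ⟶ X) (j : J ⟶ X) : Prop :=
  ∃ (MP NP W : C) (mp : MP ⟶ X) (np : NP ⟶ X) (w : W ⟶ X),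
    IsOrthoOf m mp ∧ IsOrthoOf n np ∧ IsMeet mp np w ∧ IsOrthoOf w j

/-- `p` represents the pullback `f⁻¹(n) = ker(coker(n) ∘ f)` of the kernel `n` along `f`. -/
def IsInvImg {N P X Y : C} (f : X ⟶ Y) (n : N ⟶ Y) (p : P ⟶ X) : Prop :=
  ∃ (NP : C) (np : NP ⟶ Y), IsOrthoOf n np ∧ IsDagKer (f ≫ dag np) p

/-- `i` represents the image `ker(coker(f)) = ker(ker(f†)†)` of `f`. -/
def IsImg {I X Y : C} (f : X ⟶ Y) (i : I ⟶ Y) : Prop :=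
  ∃ (K : C) (k : K ⟶ Y), IsDagKer (dag f) k ∧ IsDagKer (dag k) i

/-- zero-mono: `m ∘ f = 0` implies `f = 0`. -/
def ZeroMono {X Y : C} (m : X ⟶ Y) : Prop :=
  ∀ {Z : C} (f : Z ⟶ X), f ≫ m = 0 → f = 0

/-- zero-epi: `f ∘ e = 0` implies `f = 0`. -/
def ZeroEpi {X Y : C} (e : X ⟶ Y) : Prop :=
  ∀ {Z : C} (f : Y ⟶ Z), e ≫ f = 0 → f = 0

end Dagger

/-- A dagger kernel category: a dagger category with a zero object in which
every morphism has a kernel that is a dagger mono. -/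
class DagKerCat (C : Type u) [Category.{v} C] [HasZeroMorphisms C]
    [HasZeroObject C] extends Dagger C where
  hasKer : ∀ {X Y : C} (f : X ⟶ Y), ∃ (K : C) (k : K ⟶ X), Dagger.IsDagKer f k


namespace Dagger

variable {C : Type u} [Category.{v} C] [HasZeroMorphisms C] [Dagger C]

/-- swap a "dagger-orthogonality" zero equation -/
lemma swap_zero {A B X : C} {f : A ⟶ X} {g : B ⟶ X} (h : f ≫ dag g = 0) :
    g ≫ dag f = 0 := by
  have h2 := congrArg dag h
  rw [dag_comp, dag_dag, dag_zero] at h2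
  exact h2

lemma subLE_of {K X Y Z : C} {f : X ⟶ Y} {k : K ⟶ X} (hk : IsDagKer f k)
    {g : Z ⟶ X} (hg : g ≫ f = 0) : SubLE g k := by
  obtain ⟨h, hh, -⟩ := hk.1.lift g hg
  exact ⟨h, hh⟩

lemma subLE_trans {A B D X : C} {a : A ⟶ X} {b : B ⟶ X} {d : D ⟶ X}
    (h1 : SubLE a b) (h2 : SubLE b d) : SubLE a d := by
  obtain ⟨φ, hφ⟩ := h1; obtain ⟨ψ, hψ⟩ := h2
  exact ⟨φ ≫ ψ, by rw [Category.assoc, hψ, hφ]⟩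

/-- a kernel is the kernel of its own cokernel -/
lemma kerCoker {M P X Y : C} {f : X ⟶ Y} {m : M ⟶ X} {p : P ⟶ X}
    (hm : IsDagKer f m) (hp : IsDagKer (dag m) p) : IsDagKer (dag p) m := by
  refine ⟨⟨swap_zero hp.1.comp_zero, ?_⟩, hm.2⟩
  intro Z g hg
  obtain ⟨h, hh, -⟩ := hp.1.lift (dag f)
    (by rw [← dag_comp, hm.1.comp_zero, dag_zero])
  have hf : dag p ≫ dag h = f := by
    rw [← dag_comp, hh, dag_dag]
  exact hm.1.lift g (by rw [← hf, ← Category.assoc, hg, zero_comp])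

end Dagger

namespace Dagger

variable {C : Type u} [Category.{v} C] [HasZeroMorphisms C] [HasZeroObject C]
  [DagKerCat C]

/-- every morphism factors through its image -/
lemma img_fac {Z X KX IX : C} {x : Z ⟶ X} {kx : KX ⟶ X} {ix : IX ⟶ X}
    (hkx : IsDagKer (dag x) kx) (hix : IsDagKer (dag kx) ix) : SubLE x ix :=
  subLE_of hix (swap_zero hkx.1.comp_zero)

/-- the image of `x` is below any kernel through which `x` factors -/
lemma img_le {Z X KX IX CC : C} {x : Z ⟶ X} {kx : KX ⟶ X} {ix : IX ⟶ X}
    (hkx : IsDagKer (dag x) kx) (hix : IsDagKer (dag kx) ix)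
    {c : CC ⟶ X} (hc : KernelMap c) (hfac : SubLE x c) : SubLE ix c := by
  obtain ⟨CY, g, hcc⟩ := hc
  obtain ⟨CP, cp, hcp⟩ := DagKerCat.hasKer (dag c)
  obtain ⟨ρ, hρ⟩ := hfac
  have hxcp : x ≫ dag cp = 0 := by
    rw [← hρ, Category.assoc, swap_zero hcp.1.comp_zero, comp_zero]
  obtain ⟨σ, hσ⟩ := subLE_of hkx (swap_zero hxcp)
  refine subLE_of (kerCoker hcc hcp) ?_
  rw [← hσ, dag_comp, ← Category.assoc, hix.1.comp_zero, zero_comp]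

lemma le_join_left {A B J X : C} {a : A ⟶ X} {b : B ⟶ X} {j : J ⟶ X}
    (hj : IsJoin a b j) : SubLE a j := by
  obtain ⟨_, _, _, a', b', q, ha', hb', hq, hqj⟩ := hj
  obtain ⟨δ, hδ⟩ := hq.2.1
  refine subLE_of hqj ?_
  rw [← hδ, dag_comp, ← Category.assoc, swap_zero ha'.1.comp_zero, zero_comp]

lemma le_join_right {A B J X : C} {a : A ⟶ X} {b : B ⟶ X} {j : J ⟶ X}
    (hj : IsJoin a b j) : SubLE b j := by
  obtain ⟨_, _, _, a', b', q, ha', hb', hq, hqj⟩ := hj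
  obtain ⟨δ, hδ⟩ := hq.2.2.1
  refine subLE_of hqj ?_
  rw [← hδ, dag_comp, ← Category.assoc, swap_zero hb'.1.comp_zero, zero_comp]

/-- the join is a least upper bound among kernels -/
lemma join_le {A B J CC X : C} {a : A ⟶ X} {b : B ⟶ X} {j : J ⟶ X} {c : CC ⟶ X}
    (hj : IsJoin a b j) (hc : KernelMap c) (hac : SubLE a c) (hbc : SubLE b c) :
    SubLE j c := by
  obtain ⟨_, _, _, a', b', q, ha', hb', hq, hqj⟩ := hj
  obtain ⟨Yc, fc, hcc⟩ := hc
  obtain ⟨CP, cp, hcp⟩ := DagKerCat.hasKer (dag c)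
  have hcpa : SubLE cp a' := by
    obtain ⟨φ, hφ⟩ := hac
    exact subLE_of ha'
      (by rw [← hφ, dag_comp, ← Category.assoc, hcp.1.comp_zero, zero_comp])
  have hcpb : SubLE cp b' := by
    obtain ⟨φ, hφ⟩ := hbc
    exact subLE_of hb'
      (by rw [← hφ, dag_comp, ← Category.assoc, hcp.1.comp_zero, zero_comp])
  obtain ⟨δ, hδ⟩ := hq.2.2.2 cp ⟨_, _, hcp⟩ hcpa hcpb
  refine subLE_of (kerCoker hcc hcp) ?_
  rw [← hδ, dag_comp, ← Category.assoc, hqj.1.comp_zero, zero_comp]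

end Dagger

open Dagger in
/-- for kernels `m, n` into `X`, the pullback of `n` along the
effect `E_m = m ∘ m†` is the Sasaki hook `m ⊃ n = m^⊥ ∨ (m ∧ n)`; the left
adjoint `∃_{E_m}` gives `k & m = m ∧ (m^⊥ ∨ k)`, and the Sasaki adjunction
`k & m ≤ n ⇔ k ≤ (m ⊃ n)` holds. -/
theorem stmt13 {C : Type u} [Category.{v} C] [HasZeroMorphisms C] [HasZeroObject C]
    [DagKerCat C] {M X N K S MP W J T U V : C}
    (m : M ⟶ X) (hm : KernelMap m) (n : N ⟶ X) (hn : KernelMap n)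
    (k : K ⟶ X) (hk : KernelMap k)
    (s : S ⟶ X) (hs : IsInvImg (Dagger.dag m ≫ m) n s)
    (mp : MP ⟶ X) (hmp : IsOrthoOf m mp)
    (w : W ⟶ X) (hw : IsMeet m n w)
    (j : J ⟶ X) (hj : IsJoin mp w j)
    (t : T ⟶ X) (ht : IsImg (k ≫ (Dagger.dag m ≫ m)) t)
    (u : U ⟶ X) (hu : IsJoin mp k u)
    (v : V ⟶ X) (hv : IsMeet m u v) :
    SubEq s j ∧ SubEq t v ∧ (SubLE t n ↔ SubLE k s) := by
  obtain ⟨Ym, fm, hmK⟩ := hm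
  obtain ⟨Yn, fn, hnK⟩ := hn
  obtain ⟨NP, np, hno, hsK⟩ := hs
  obtain ⟨KH, kh, hkh, htK⟩ := ht
  obtain ⟨MP2, K1, QU, mp2, k1, qu, hmp2, hk1, hqu, hquu⟩ := hu
  have hDM : m ≫ dag m = 𝟙 M := hmK.2
  -- n is the kernel of the cokernel of n, similarly for m
  have n_ker : IsDagKer (dag np) n := kerCoker hnK hno
  have m_ker : IsDagKer (dag mp) m := kerCoker hmK hmp
  -- n ≫ dag np = 0, m ≫ dag mp = 0
  have hnnp : n ≫ dag np = 0 := swap_zero hno.1.comp_zero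
  have hmmp : m ≫ dag mp = 0 := swap_zero hmp.1.comp_zero
  ------------------------------------------------------------------
  -- Part 1 : SubEq s j
  ------------------------------------------------------------------
  have s_le_j : SubLE s j := by
    obtain ⟨MP1, W1, Q1, mp1, w1, q, hmp1, hw1, hq, hqj⟩ := hj
    -- q ≤ m
    have hqm : SubLE q m := subLE_trans hq.2.1 (subLE_of m_ker hmp1.1.comp_zero)
    obtain ⟨α, hα⟩ := hqm
    obtain ⟨δ, hδ⟩ := hq.2.2.1   -- q = δ ≫ w1
    -- x := s ≫ dag m ≫ m factors through w
    set x : S ⟶ X := s ≫ (dag m ≫ m) with hxdef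
    have hx0 : x ≫ dag np = 0 := by
      rw [hxdef, Category.assoc]
      exact hsK.1.comp_zero
    have hxn : SubLE x n := subLE_of n_ker hx0
    obtain ⟨KX, kx, hkx⟩ := DagKerCat.hasKer (dag x)
    obtain ⟨IX, ix, hix⟩ := DagKerCat.hasKer (dag kx)
    have hxm : SubLE x m := ⟨s ≫ dag m, by rw [hxdef, Category.assoc]⟩
    have hixw : SubLE ix w :=
      hw.2.2.2 ix ⟨_, _, hix⟩ (img_le hkx hix ⟨_, _, hmK⟩ hxm)
        (img_le hkx hix ⟨_, _, hnK⟩ hxn)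
    have hxw : SubLE x w := subLE_trans (img_fac hkx hix) hixw
    obtain ⟨γ, hγ⟩ := hxw
    -- compute s ≫ dag q = 0
    have hsm : s ≫ dag m = x ≫ dag m := by
      rw [hxdef]
      simp only [Category.assoc, hDM, Category.comp_id]
    have hwq : w ≫ dag q = 0 := by
      rw [← hδ, dag_comp, ← Category.assoc, swap_zero hw1.1.comp_zero, zero_comp]
    refine subLE_of hqj ?_
    calc s ≫ dag q = s ≫ dag m ≫ dag α := by rw [← hα, dag_comp]
      _ = (x ≫ dag m) ≫ dag α := by rw [← Category.assoc, hsm]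
      _ = γ ≫ w ≫ dag q := by
            rw [← hγ, ← hα, dag_comp]
            simp only [Category.assoc]
      _ = 0 := by rw [hwq, comp_zero]
  have j_le_s : SubLE j s := by
    refine join_le hj ⟨_, _, hsK⟩ ?_ ?_
    · refine subLE_of hsK ?_
      rw [← Category.assoc, ← Category.assoc, hmp.1.comp_zero, zero_comp, zero_comp]
    · obtain ⟨φ, hφ⟩ := hw.2.1
      obtain ⟨ψ, hψ⟩ := hw.2.2.1
      refine subLE_of hsK ?_
      have : w ≫ (dag m ≫ m) = w := by
        rw [← hφ]
        simp only [Category.assoc]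
        rw [← Category.assoc m (dag m) m, hDM, Category.id_comp]
      rw [← Category.assoc, this, ← hψ, Category.assoc, hnnp, comp_zero]
  ------------------------------------------------------------------
  -- Part 2 : SubEq t v
  ------------------------------------------------------------------
  have hdagh : dag (k ≫ (dag m ≫ m)) = (dag m ≫ m) ≫ dag k := by
    rw [dag_comp, dag_comp, dag_dag]
  have t_le_v : SubLE t v := by
    have htm : SubLE t m :=
      img_le hkh htK ⟨_, _, hmK⟩ ⟨k ≫ dag m, by rw [Category.assoc]⟩
    have hqum : SubLE qu m :=
      subLE_trans hqu.2.1 (subLE_of m_ker hmp2.1.comp_zero)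
    obtain ⟨α, hα⟩ := hqum
    obtain ⟨δ, hδ⟩ := hqu.2.2.1    -- qu = δ ≫ k1
    have hkqu : k ≫ dag qu = 0 := by
      rw [← hδ, dag_comp, ← Category.assoc, swap_zero hk1.1.comp_zero, zero_comp]
    have hhqu : (k ≫ (dag m ≫ m)) ≫ dag qu = 0 := by
      calc (k ≫ (dag m ≫ m)) ≫ dag qu
          = k ≫ dag m ≫ (m ≫ dag m) ≫ dag α := by
            rw [← hα, dag_comp]; simp only [Category.assoc]
        _ = k ≫ dag qu := by rw [hDM, Category.id_comp, ← dag_comp, hα]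
        _ = 0 := hkqu
    have htu : SubLE t u :=
      img_le hkh htK ⟨_, _, hquu⟩ (subLE_of hquu hhqu)
    exact hv.2.2.2 t ⟨_, _, htK⟩ htm htu
  have v_le_t : SubLE v t := by
    set y : KH ⟶ X := kh ≫ (dag m ≫ m) with hydef
    have hyk : y ≫ dag k = 0 := by
      have := hkh.1.comp_zero
      rw [hdagh, ← Category.assoc] at this
      exact this
    have hyk1 : SubLE y k1 := subLE_of hk1 hyk
    have hym : SubLE y m := ⟨kh ≫ dag m, by rw [hydef, Category.assoc]⟩
    obtain ⟨KY, ky, hky⟩ := DagKerCat.hasKer (dag y)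
    obtain ⟨IY, iy, hiy⟩ := DagKerCat.hasKer (dag ky)
    have hm_mp2 : SubLE m mp2 := subLE_of hmp2 hmmp
    have hiyqu : SubLE iy qu :=
      hqu.2.2.2 iy ⟨_, _, hiy⟩
        (subLE_trans (img_le hky hiy ⟨_, _, hmK⟩ hym) hm_mp2)
        (img_le hky hiy ⟨_, _, hk1⟩ hyk1)
    have hyqu : SubLE y qu := subLE_trans (img_fac hky hiy) hiyqu
    obtain ⟨γ, hγ⟩ := hyqu
    obtain ⟨β, hβ⟩ := hv.2.1        -- v = β ≫ m
    obtain ⟨φ, hφ⟩ := hv.2.2.1      -- v = φ ≫ u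
    have hquv : qu ≫ dag v = 0 := by
      refine swap_zero ?_
      rw [← hφ, Category.assoc, hquu.1.comp_zero, comp_zero]
    have hkhm : kh ≫ dag m = y ≫ dag m := by
      rw [hydef]
      simp only [Category.assoc, hDM, Category.comp_id]
    have hkhv : kh ≫ dag v = 0 := by
      calc kh ≫ dag v = (kh ≫ dag m) ≫ dag β := by rw [← hβ, dag_comp, Category.assoc]
        _ = (y ≫ dag m) ≫ dag β := by rw [hkhm]
        _ = y ≫ dag v := by rw [← hβ, dag_comp, Category.assoc]
        _ = γ ≫ qu ≫ dag v := by rw [← hγ, Category.assoc]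
        _ = 0 := by rw [hquv, comp_zero]
    exact subLE_of htK (swap_zero hkhv)
  ------------------------------------------------------------------
  -- Part 3 : adjunction
  ------------------------------------------------------------------
  refine ⟨⟨s_le_j, j_le_s⟩, ⟨t_le_v, v_le_t⟩, ?_, ?_⟩
  · intro htn
    obtain ⟨ρ, hρ⟩ := htn
    obtain ⟨e, he⟩ := img_fac hkh htK
    refine subLE_of hsK ?_
    rw [← Category.assoc, ← Category.assoc, Category.assoc k, ← he, ← hρ]
    simp only [Category.assoc]
    rw [hnnp, comp_zero, comp_zero]
  · intro hks
    obtain ⟨φ, hφ⟩ := hks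
    have hhnp : (k ≫ (dag m ≫ m)) ≫ dag np = 0 := by
      rw [← hφ]
      simp only [Category.assoc]
      rw [← Category.assoc (dag m), hsK.1.comp_zero, comp_zero]
    exact img_le hkh htK ⟨_, _, hnK⟩ (subLE_of n_ker hhnp)
end

section
/- In a dagger kernel category, the mapping m ↦ E_m := m ∘ m† is an order isomorphism between KSub(X) and the poset of self-adjoint endomorphisms p : X → X with p ≤ id (with respect to the image-factorisation order on homsets); every such p is automatically idempotent. If moreover zero-epis are epis, these coincide with all self-adjoint idempotents on X. -/
open CategoryTheory Limits

universe v u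

open Dagger

variable {C : Type u} [Category.{v} C] [HasZeroMorphisms C] [HasZeroObject C]
  [DagKerCat C]

/-- The factorisation order on a homset: `f ≤ g` when the
image/coimage factorisations of `f` and `g` are related by (dagger monic)
comparison maps `φ, ψ` satisfying the four equations of Definition 7.1. -/
def HomLE {X Y : C} (f g : X ⟶ Y) : Prop :=
  ∃ (If Ifd Ig Igd : C) (i_f : If ⟶ Y) (i_fd : Ifd ⟶ X) (m_f : Ifd ⟶ If)
    (i_g : Ig ⟶ Y) (i_gd : Igd ⟶ X) (m_g : Igd ⟶ Ig)
    (φ : If ⟶ Ig) (ψ : Ifd ⟶ Igd),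
    IsImg f i_f ∧ IsImg (Dagger.dag f) i_fd ∧
    Dagger.dag i_fd ≫ m_f ≫ i_f = f ∧
    IsImg g i_g ∧ IsImg (Dagger.dag g) i_gd ∧
    Dagger.dag i_gd ≫ m_g ≫ i_g = g ∧
    Dagger.dag i_gd ≫ Dagger.dag ψ = Dagger.dag i_fd ∧
    m_f ≫ φ = ψ ≫ m_g ∧
    m_g ≫ Dagger.dag φ = Dagger.dag ψ ≫ m_f ∧
    φ ≫ i_g = i_f


section Aux

open Dagger

variable {C : Type u} [Category.{v} C] [HasZeroMorphisms C] [HasZeroObject C]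
  [DagKerCat C]

/-- cancellation for dagger monos -/
theorem dagMono_cancel {M X Z : C} {m : M ⟶ X} (hm : DaggerMono m)
    {a b : Z ⟶ M} (h : a ≫ m = b ≫ m) : a = b := by
  calc a = a ≫ 𝟙 M := (Category.comp_id a).symm
    _ = a ≫ (m ≫ Dagger.dag m) := by rw [hm]
    _ = (a ≫ m) ≫ Dagger.dag m := by rw [Category.assoc]
    _ = (b ≫ m) ≫ Dagger.dag m := by rw [h]
    _ = b ≫ (m ≫ Dagger.dag m) := by rw [Category.assoc]
    _ = b := by rw [hm, Category.comp_id]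

/-- double orthocomplement: if `m = ker f` and `l = ker m†` then `m = ker l†`. -/
theorem ortho_ortho {K M X Y : C} {f : X ⟶ Y} {m : M ⟶ X} {l : K ⟶ X}
    (hm : IsDagKer f m) (hl : IsDagKer (Dagger.dag m) l) :
    IsDagKer (Dagger.dag l) m := by
  obtain ⟨hmker, hmdm⟩ := hm
  obtain ⟨hlker, hldm⟩ := hl
  refine ⟨⟨?_, ?_⟩, hmdm⟩
  · have h1 : l ≫ Dagger.dag m = 0 := hlker.comp_zero
    have h2 := congrArg Dagger.dag h1
    rw [Dagger.dag_comp, Dagger.dag_dag, Dagger.dag_zero] at h2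
    exact h2
  · intro Z g hg
    have h2 : Dagger.dag f ≫ Dagger.dag m = 0 := by
      have h3 := congrArg Dagger.dag hmker.comp_zero
      rw [Dagger.dag_comp, Dagger.dag_zero] at h3
      exact h3
    obtain ⟨v, hv, -⟩ := hlker.lift (Dagger.dag f) h2
    have hf : f = Dagger.dag l ≫ Dagger.dag v := by
      have h4 := congrArg Dagger.dag hv
      rw [Dagger.dag_comp, Dagger.dag_dag] at h4
      exact h4.symm
    have hgf : g ≫ f = 0 := by
      rw [hf, ← Category.assoc, hg, zero_comp]
    exact hmker.lift g hgf

/-- `m` is the image of `E_m = m ∘ m†` when `m` is a kernel. -/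
theorem isImg_E {M : C} {X : C} {m : M ⟶ X} (hm : KernelMap m) :
    IsImg (Dagger.dag m ≫ m) m := by
  obtain ⟨Y, f, hf⟩ := hm
  obtain ⟨K, l, hl⟩ := DagKerCat.hasKer (Dagger.dag m)
  refine ⟨K, l, ?_, ortho_ortho hf hl⟩
  have hE : Dagger.dag (Dagger.dag m ≫ m) = Dagger.dag m ≫ m := by
    rw [Dagger.dag_comp, Dagger.dag_dag]
  rw [hE]
  refine ⟨⟨?_, ?_⟩, hl.2⟩
  · rw [← Category.assoc, hl.1.comp_zero, zero_comp]
  · intro Z g hg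
    have hg' : g ≫ Dagger.dag m = 0 := by
      calc g ≫ Dagger.dag m = (g ≫ Dagger.dag m) ≫ (m ≫ Dagger.dag m) := by
            rw [hf.2, Category.comp_id]
        _ = (g ≫ (Dagger.dag m ≫ m)) ≫ Dagger.dag m := by
            simp only [Category.assoc]
        _ = 0 := by rw [hg, zero_comp]
    exact hl.1.lift g hg'

/-- any two images of the same map are comparable as subobjects. -/
theorem img_subLE {I I' X Y : C} {f : X ⟶ Y} {i : I ⟶ Y} {i' : I' ⟶ Y}
    (h : IsImg f i) (h' : IsImg f i') : SubLE i i' := by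
  obtain ⟨K, k, hk, hki⟩ := h
  obtain ⟨K', k', hk', hki'⟩ := h'
  obtain ⟨β, hβ, -⟩ := hk.1.lift k' hk'.1.comp_zero
  have hz : i ≫ Dagger.dag k' = 0 := by
    have hb : Dagger.dag k' = Dagger.dag k ≫ Dagger.dag β := by
      rw [← hβ, Dagger.dag_comp]
    rw [hb, ← Category.assoc, hki.1.comp_zero, zero_comp]
  obtain ⟨φ, hφ, -⟩ := hki'.1.lift i hz
  exact ⟨φ, hφ⟩

/-- the identity is a kernel. -/
theorem kernelMap_id (X : C) : KernelMap (𝟙 X) := by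
  refine ⟨X, 0, ⟨⟨by simp, ?_⟩, ?_⟩⟩
  · intro Z g hg
    exact ⟨g, Category.comp_id g, fun h hh => by simpa using hh⟩
  · show 𝟙 X ≫ Dagger.dag (𝟙 X) = 𝟙 X
    rw [Dagger.dag_id, Category.comp_id]

theorem homLE_of_subLE {M N X : C} {m : M ⟶ X} {n : N ⟶ X}
    (hm : KernelMap m) (hn : KernelMap n) (φ₀ : M ⟶ N) (hφ : φ₀ ≫ n = m) :
    HomLE (Dagger.dag m ≫ m) (Dagger.dag n ≫ n) := by
  have hEm : Dagger.dag (Dagger.dag m ≫ m) = Dagger.dag m ≫ m := by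
    rw [Dagger.dag_comp, Dagger.dag_dag]
  have hEn : Dagger.dag (Dagger.dag n ≫ n) = Dagger.dag n ≫ n := by
    rw [Dagger.dag_comp, Dagger.dag_dag]
  refine ⟨M, M, N, N, m, m, 𝟙 M, n, n, 𝟙 N, φ₀, φ₀,
    isImg_E hm, ?_, by simp, isImg_E hn, ?_, by simp, ?_, by simp, by simp, hφ⟩
  · rw [hEm]; exact isImg_E hm
  · rw [hEn]; exact isImg_E hn
  · rw [← Dagger.dag_comp, hφ]

/-- an image of the identity is a dagger isomorphism. -/
theorem img_id_unitary {I X : C} {i : I ⟶ X} (h : IsImg (𝟙 X) i) :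
    i ≫ Dagger.dag i = 𝟙 I ∧ Dagger.dag i ≫ i = 𝟙 X := by
  obtain ⟨K, k, hk, hki⟩ := h
  have hdm : DaggerMono i := hki.2
  have hk0 : k = 0 := by
    have := hk.1.comp_zero
    rwa [Dagger.dag_id, Category.comp_id] at this
  obtain ⟨u, hu, -⟩ := hki.1.lift (𝟙 X)
    (by rw [hk0, Dagger.dag_zero, comp_zero])
  refine ⟨hdm, ?_⟩
  calc Dagger.dag i ≫ i = 𝟙 X ≫ (Dagger.dag i ≫ i) := (Category.id_comp _).symm
    _ = (u ≫ i) ≫ (Dagger.dag i ≫ i) := by rw [hu]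
    _ = u ≫ (i ≫ Dagger.dag i) ≫ i := by simp only [Category.assoc]
    _ = u ≫ i := by rw [hdm, Category.id_comp]
    _ = 𝟙 X := hu

end Aux

/-- `m ↦ E_m = m ∘ m†` is an order isomorphism between `KSub(X)`
and the self-adjoint endomorphisms `p ≤ id` (all of which are idempotent);
if zero-epis are epis, these are exactly the self-adjoint idempotents. -/
theorem stmt18 (X : C) :
    (∀ {M : C} (m : M ⟶ X), KernelMap m →
      Dagger.dag (Dagger.dag m ≫ m) = Dagger.dag m ≫ m ∧
      HomLE (Dagger.dag m ≫ m) (𝟙 X) ∧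
      (Dagger.dag m ≫ m) ≫ (Dagger.dag m ≫ m) = Dagger.dag m ≫ m) ∧
    (∀ {M N : C} (m : M ⟶ X) (n : N ⟶ X), KernelMap m → KernelMap n →
      (SubLE m n ↔ HomLE (Dagger.dag m ≫ m) (Dagger.dag n ≫ n))) ∧
    (∀ (p : X ⟶ X), Dagger.dag p = p → HomLE p (𝟙 X) →
      ∃ (M : C) (m : M ⟶ X), KernelMap m ∧ p = Dagger.dag m ≫ m) ∧
    ((∀ {A B : C} (e : A ⟶ B), ZeroEpi e → Epi e) →
      ∀ (p : X ⟶ X), Dagger.dag p = p → p ≫ p = p →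
        ∃ (M : C) (m : M ⟶ X), KernelMap m ∧ p = Dagger.dag m ≫ m) := by
  have dagMono_of_kernelMap : ∀ {M : C} (m : M ⟶ X), KernelMap m → DaggerMono m := by
    rintro M m ⟨Y, f, hf⟩; exact hf.2
  refine ⟨?_, ?_, ?_, ?_⟩
  · -- part 1
    intro M m hm
    have hdm : DaggerMono m := dagMono_of_kernelMap m hm
    refine ⟨by rw [Dagger.dag_comp, Dagger.dag_dag], ?_, ?_⟩
    · have h := homLE_of_subLE hm (kernelMap_id X) m (Category.comp_id m)
      rw [Dagger.dag_id, Category.comp_id] at h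
      exact h
    · calc (Dagger.dag m ≫ m) ≫ Dagger.dag m ≫ m
          = Dagger.dag m ≫ (m ≫ Dagger.dag m) ≫ m := by simp only [Category.assoc]
        _ = Dagger.dag m ≫ m := by rw [hdm, Category.id_comp]
  · -- part 2
    intro M N m n hm hn
    constructor
    · rintro ⟨φ₀, hφ⟩
      exact homLE_of_subLE hm hn φ₀ hφ
    · rintro ⟨If, Ifd, Ig, Igd, i_f, i_fd, m_f, i_g, i_gd, m_g, φ, ψ,
        himg_f, -, -, himg_g, -, -, -, -, -, e4⟩
      obtain ⟨φ₁, hφ₁⟩ := img_subLE (isImg_E hm) himg_f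
      obtain ⟨φ₂, hφ₂⟩ := img_subLE himg_g (isImg_E hn)
      refine ⟨φ₁ ≫ φ ≫ φ₂, ?_⟩
      rw [Category.assoc, Category.assoc, hφ₂, e4, hφ₁]
  · -- part 3
    intro p _ hle
    obtain ⟨If, Ifd, Ig, Igd, i_f, i_fd, m_f, i_g, i_gd, m_g, φ, ψ,
      himg_f, -, hfac_f, himg_g, himg_gd, hfac_g, e1, e2, e3, e4⟩ := hle
    obtain ⟨hg1, hg2⟩ := img_id_unitary himg_g
    obtain ⟨hgd1, hgd2⟩ := img_id_unitary
      (by rwa [Dagger.dag_id] at himg_gd : IsImg (𝟙 X) i_gd)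
    have hmig : m_g ≫ i_g = i_gd := by
      calc m_g ≫ i_g = (i_gd ≫ Dagger.dag i_gd) ≫ (m_g ≫ i_g) := by
            rw [hgd1, Category.id_comp]
        _ = i_gd ≫ (Dagger.dag i_gd ≫ m_g ≫ i_g) := by simp only [Category.assoc]
        _ = i_gd := by rw [hfac_g, Category.comp_id]
    have hmg : m_g = i_gd ≫ Dagger.dag i_g := by
      calc m_g = m_g ≫ (i_g ≫ Dagger.dag i_g) := by rw [hg1, Category.comp_id]
        _ = (m_g ≫ i_g) ≫ Dagger.dag i_g := by rw [Category.assoc]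
        _ = i_gd ≫ Dagger.dag i_g := by rw [hmig]
    have e1' : ψ ≫ i_gd = i_fd := by
      have h := congrArg Dagger.dag e1
      rwa [Dagger.dag_comp, Dagger.dag_dag, Dagger.dag_dag, Dagger.dag_dag] at h
    have key2 : Dagger.dag i_fd ≫ m_f = Dagger.dag i_f := by
      calc Dagger.dag i_fd ≫ m_f
          = (Dagger.dag i_gd ≫ Dagger.dag ψ) ≫ m_f := by rw [e1]
        _ = Dagger.dag i_gd ≫ (m_g ≫ Dagger.dag φ) := by
            rw [Category.assoc, ← e3]
        _ = Dagger.dag i_gd ≫ ((i_gd ≫ Dagger.dag i_g) ≫ Dagger.dag φ) := by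
            rw [hmg]
        _ = (Dagger.dag i_gd ≫ i_gd) ≫ (Dagger.dag i_g ≫ Dagger.dag φ) := by
            simp only [Category.assoc]
        _ = Dagger.dag i_g ≫ Dagger.dag φ := by rw [hgd2, Category.id_comp]
        _ = Dagger.dag (φ ≫ i_g) := (Dagger.dag_comp _ _).symm
        _ = Dagger.dag i_f := by rw [e4]
    have hKM : KernelMap i_f := by
      obtain ⟨K, k, -, hki⟩ := himg_f
      exact ⟨K, Dagger.dag k, hki⟩
    refine ⟨If, i_f, hKM, ?_⟩
    calc p = Dagger.dag i_fd ≫ m_f ≫ i_f := hfac_f.symm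
      _ = (Dagger.dag i_fd ≫ m_f) ≫ i_f := by rw [Category.assoc]
      _ = Dagger.dag i_f ≫ i_f := by rw [key2]
  · -- part 4
    intro hyp p hsa hid
    obtain ⟨K, k, hk⟩ := DagKerCat.hasKer (Dagger.dag p)
    obtain ⟨M, m, hm⟩ := DagKerCat.hasKer (Dagger.dag k)
    have hpdk : p ≫ Dagger.dag k = 0 := by
      have h := congrArg Dagger.dag hk.1.comp_zero
      rwa [Dagger.dag_comp, Dagger.dag_dag, Dagger.dag_zero] at h
    obtain ⟨e, he, -⟩ := hm.1.lift p hpdk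
    have hpe : p ≫ Dagger.dag m = e := by
      calc p ≫ Dagger.dag m = (e ≫ m) ≫ Dagger.dag m := by rw [he]
        _ = e ≫ (m ≫ Dagger.dag m) := Category.assoc _ _ _
        _ = e := by rw [hm.2, Category.comp_id]
    have hze : ZeroEpi e := by
      intro Z g hg
      have hg' : p ≫ (Dagger.dag m ≫ g) = 0 := by
        rw [← Category.assoc, hpe, hg]
      have h2 := congrArg Dagger.dag hg'
      rw [Dagger.dag_comp, Dagger.dag_comp, Dagger.dag_dag, Dagger.dag_zero, hsa] at h2
      have h1 : (Dagger.dag g ≫ m) ≫ Dagger.dag p = 0 := by rw [hsa]; exact h2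
      obtain ⟨w, hw, -⟩ := hk.1.lift (Dagger.dag g ≫ m) h1
      have h3 : Dagger.dag m ≫ g = Dagger.dag k ≫ Dagger.dag w := by
        have h4 := congrArg Dagger.dag hw
        rw [Dagger.dag_comp, Dagger.dag_comp, Dagger.dag_dag] at h4
        exact h4.symm
      calc g = (m ≫ Dagger.dag m) ≫ g := by rw [hm.2, Category.id_comp]
        _ = m ≫ (Dagger.dag m ≫ g) := Category.assoc _ _ _
        _ = (m ≫ Dagger.dag k) ≫ Dagger.dag w := by rw [h3, Category.assoc]
        _ = 0 := by rw [hm.1.comp_zero, zero_comp]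
    have hepi : Epi e := hyp e hze
    have hme : m ≫ e = 𝟙 M := by
      have h5 : e ≫ (m ≫ e) = e ≫ 𝟙 M := by
        apply dagMono_cancel hm.2
        calc (e ≫ (m ≫ e)) ≫ m = (e ≫ m) ≫ (e ≫ m) := by simp only [Category.assoc]
          _ = p ≫ p := by rw [he]
          _ = p := hid
          _ = (e ≫ 𝟙 M) ≫ m := by rw [Category.comp_id, he]
      exact hepi.left_cancellation _ _ h5
    have hde : Dagger.dag e = m := by
      calc Dagger.dag e = Dagger.dag (p ≫ Dagger.dag m) := by rw [hpe]
        _ = m ≫ p := by rw [Dagger.dag_comp, Dagger.dag_dag, hsa]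
        _ = m ≫ (e ≫ m) := by rw [he]
        _ = (m ≫ e) ≫ m := (Category.assoc _ _ _).symm
        _ = m := by rw [hme, Category.id_comp]
    refine ⟨M, m, ⟨K, Dagger.dag k, hm⟩, ?_⟩
    calc p = e ≫ m := he.symm
      _ = Dagger.dag (Dagger.dag e) ≫ m := by rw [Dagger.dag_dag]
      _ = Dagger.dag m ≫ m := by rw [hde]
end
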